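/- Let X, Y be Banach spaces, V ⊆ X open, Φ: V → Y continuous, and ∂Φ a set-valued map into L(X,Y) with nonempty values such that Φ is ∂Φ-semismooth at a locally unique zero ū ∈ V (i.e., sup_{M ∈ ∂Φ(ū+v)} ‖Φ(ū+v) − Φ(ū) − M v‖ = o(‖v‖) as v → 0). Suppose there exists C > 0 such that every M ∈ ∂Φ(u) for u near ū is invertible with ‖M⁻¹‖ ≤ C. Then there exists δ > 0 such that for any u₀ with ‖u₀ − ū‖ < δ, the Newton iteration u_{j+1} = u_j − M_j⁻¹ Φ(u_j) (with any choice M_j ∈ ∂Φ(u_j)) is well defined and converges superlinearly to ū: ‖u_{j+1} − ū‖ / ‖u_j − ū‖ → 0. -/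

import Mathlib

open Filter

/-- Semismooth Newton convergence theorem: if `Φ` is `∂Φ`-semismooth at a locally
unique zero `ū` and the generalized derivatives near `ū` have uniformly bounded
inverses, then the Newton iteration started close enough to `ū` converges
superlinearly to `ū`. -/
theorem stmt_9 {X Y : Type*} [NormedAddCommGroup X] [NormedSpace ℝ X]
    [CompleteSpace X] [NormedAddCommGroup Y] [NormedSpace ℝ Y]
    (V : Set X) (hV : IsOpen V) (Φ : X → Y) (hΦc : ContinuousOn Φ V)
    (DΦ : X → Set (X →L[ℝ] Y)) (hne : ∀ u ∈ V, (DΦ u).Nonempty)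
    (ub : X) (hubV : ub ∈ V) (hzero : Φ ub = 0)
    (hloc : ∃ r > 0, ∀ u : X, ‖u - ub‖ < r → Φ u = 0 → u = ub)
    (hss : ∀ ε > 0, ∃ δ > 0, ∀ v : X, ‖v‖ < δ →
      ∀ M ∈ DΦ (ub + v), ‖Φ (ub + v) - Φ ub - M v‖ ≤ ε * ‖v‖)
    (C : ℝ) (hC : 0 < C)
    (hinv : ∃ ρ > 0, ∀ u : X, ‖u - ub‖ < ρ → ∀ M ∈ DΦ u,
      ∃ N : Y →L[ℝ] X, ‖N‖ ≤ C ∧ (∀ x, N (M x) = x) ∧ (∀ y, M (N y) = y)) :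
    ∃ δ > 0, ∀ (u : ℕ → X) (M : ℕ → X →L[ℝ] Y) (N : ℕ → Y →L[ℝ] X),
      ‖u 0 - ub‖ < δ →
      (∀ j, M j ∈ DΦ (u j)) →
      (∀ j, (∀ x, N j (M j x) = x) ∧ (∀ y, M j (N j y) = y)) →
      (∀ j, u (j + 1) = u j - N j (Φ (u j))) →
      Tendsto u atTop (nhds ub) ∧
      Tendsto (fun j => ‖u (j + 1) - ub‖ / ‖u j - ub‖) atTop (nhds 0) := by
  obtain ⟨ρ, hρ, hinv'⟩ := hinv
  have h2C : (0:ℝ) < 1 / (2 * C) := by positivity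
  obtain ⟨δ₀, hδ₀, hss0⟩ := hss (1 / (2 * C)) h2C
  refine ⟨min δ₀ ρ, lt_min hδ₀ hρ, ?_⟩
  intro u M N h0 hM hN hrec
  -- norm bound on N j
  have hNnorm : ∀ j, ‖u j - ub‖ < ρ → ‖N j‖ ≤ C := by
    intro j hj
    obtain ⟨N', hN'le, hl, hr⟩ := hinv' (u j) hj (M j) (hM j)
    have hNeq : N j = N' := by
      ext y
      have h1 := (hN j).1 (N' y)
      rw [hr y] at h1
      exact h1
    rwa [hNeq]
  -- key step estimate
  have key : ∀ ε : ℝ, ∀ δε : ℝ, (∀ v : X, ‖v‖ < δε → ∀ Mv ∈ DΦ (ub + v),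
      ‖Φ (ub + v) - Φ ub - Mv v‖ ≤ ε * ‖v‖) →
      ∀ j, ‖u j - ub‖ < δε → ‖u j - ub‖ < ρ →
      ‖u (j+1) - ub‖ ≤ C * ε * ‖u j - ub‖ := by
    intro ε δε hssε j hj hjρ
    have huj : u j = ub + (u j - ub) := by abel
    have hid : u (j+1) - ub = - N j (Φ (ub + (u j - ub)) - Φ ub - M j (u j - ub)) := by
      rw [hrec j]
      have h1 : N j (Φ (ub + (u j - ub)) - Φ ub - M j (u j - ub))
          = N j (Φ (u j)) - (u j - ub) := by
        rw [hzero, ← huj]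
        simp [map_sub, (hN j).1]
      rw [h1]
      abel
    have hmem : M j ∈ DΦ (ub + (u j - ub)) := by rw [← huj]; exact hM j
    calc ‖u (j+1) - ub‖ = ‖N j (Φ (ub + (u j - ub)) - Φ ub - M j (u j - ub))‖ := by
          rw [hid, norm_neg]
      _ ≤ ‖N j‖ * ‖Φ (ub + (u j - ub)) - Φ ub - M j (u j - ub)‖ := (N j).le_opNorm _
      _ ≤ C * (ε * ‖u j - ub‖) := by
          apply mul_le_mul (hNnorm j hjρ) (hssε _ hj (M j) hmem) (norm_nonneg _) hC.le
      _ = C * ε * ‖u j - ub‖ := by ring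
  have hChalf : C * (1 / (2 * C)) = 1 / 2 := by field_simp
  -- invariance and geometric decay
  have hall : ∀ j, ‖u j - ub‖ < min δ₀ ρ ∧ ‖u j - ub‖ ≤ (1/2)^j * ‖u 0 - ub‖ := by
    intro j
    induction j with
    | zero => exact ⟨h0, by simp⟩
    | succ j ih =>
      obtain ⟨ihlt, ihle⟩ := ih
      have hstep := key (1 / (2 * C)) δ₀ hss0 j (lt_of_lt_of_le ihlt (min_le_left _ _))
        (lt_of_lt_of_le ihlt (min_le_right _ _))
      rw [hChalf] at hstep
      constructor
      · calc ‖u (j+1) - ub‖ ≤ (1/2) * ‖u j - ub‖ := hstep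
          _ ≤ (1/2) * ‖u j - ub‖ + (1/2) * ‖u j - ub‖ := by
              nlinarith [norm_nonneg (u j - ub)]
          _ = ‖u j - ub‖ := by ring
          _ < min δ₀ ρ := ihlt
      · calc ‖u (j+1) - ub‖ ≤ (1/2) * ‖u j - ub‖ := hstep
          _ ≤ (1/2) * ((1/2)^j * ‖u 0 - ub‖) := by linarith
          _ = (1/2)^(j+1) * ‖u 0 - ub‖ := by ring
  have hnorm0 : Tendsto (fun j => ‖u j - ub‖) atTop (nhds 0) := by
    apply squeeze_zero (fun j => norm_nonneg _) (fun j => (hall j).2)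
    have := (tendsto_pow_atTop_nhds_zero_of_lt_one (by norm_num : (0:ℝ) ≤ 1/2)
      (by norm_num : (1:ℝ)/2 < 1)).mul_const ‖u 0 - ub‖
    simpa using this
  have htend : Tendsto u atTop (nhds ub) := by
    rw [tendsto_iff_norm_sub_tendsto_zero]
    exact hnorm0
  refine ⟨htend, ?_⟩
  rw [Metric.tendsto_atTop]
  intro ε hε
  have hε2C : (0:ℝ) < ε / (2 * C) := by positivity
  obtain ⟨δε, hδε, hssε⟩ := hss (ε / (2 * C)) hε2C
  obtain ⟨J, hJ⟩ := (Metric.tendsto_atTop.mp hnorm0) δε hδε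
  refine ⟨J, fun j hj => ?_⟩
  have hjδ : ‖u j - ub‖ < δε := by
    have := hJ j hj
    rwa [Real.dist_eq, sub_zero, abs_of_nonneg (norm_nonneg _)] at this
  have hjρ : ‖u j - ub‖ < ρ := lt_of_lt_of_le (hall j).1 (min_le_right _ _)
  have hstep := key (ε / (2 * C)) δε hssε j hjδ hjρ
  have hCeq : C * (ε / (2 * C)) = ε / 2 := by field_simp
  rw [hCeq] at hstep
  have hq : ‖u (j+1) - ub‖ / ‖u j - ub‖ ≤ ε / 2 := by
    rcases eq_or_lt_of_le (norm_nonneg (u j - ub)) with h | h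
    · have hz : ‖u (j+1) - ub‖ = 0 := le_antisymm (by rw [← h] at hstep; linarith) (norm_nonneg _)
      rw [hz, ← h]
      simp
      positivity
    · rw [div_le_iff₀ h]
      linarith [hstep]
  have hqnn : (0:ℝ) ≤ ‖u (j+1) - ub‖ / ‖u j - ub‖ := by positivity
  rw [Real.dist_eq, sub_zero, abs_of_nonneg hqnn]
  linarith
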